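/- (Comparison of Dirichlet forms, upper bound direction) Let G=(V,E) be a finite graph with maximum degree d_max, p ∈ (0,1/2], Ω₊ = {0,1}^V∖{0}, μ the Bernoulli(p) product measure conditioned on Ω₊. Let D(f) be the CBSEP Dirichlet form and D^FA(f) = Σ_x E_μ[𝟙{Σ_{y∼x}ω_y ≥ 1}·p(1-p)·(f(ω^x)-f(ω))²] the FA-1f Dirichlet form. Then there is an absolute constant c > 0 with c^{-1}·D^FA(f) ≤ D(f) for every f : Ω₊ → ℝ. -/

import Mathlib

open Finset

variable {V : Type*} [Fintype V] [DecidableEq V]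

/-- Number of particles of a configuration. -/
def Np (ω : V → Bool) : ℕ := (Finset.univ.filter (fun x => ω x = true)).card

/-- Configurations with at least one particle. -/
def OmegaPlus (V : Type*) [Fintype V] [DecidableEq V] : Finset (V → Bool) :=
  Finset.univ.filter (fun ω => 0 < Np ω)

/-- Bernoulli(p) product weight. -/
def bern (p : ℝ) (ω : V → Bool) : ℝ := ∏ x, if ω x = true then p else 1 - p

/-- The measure `π` conditioned on at least one particle (weight on `OmegaPlus`). -/
noncomputable def mu (p : ℝ) (ω : V → Bool) : ℝ := bern p ω / (1 - (1 - p) ^ Fintype.card V)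

/-- Fill vertex `x` with a particle. -/
def fill (ω : V → Bool) (x : V) : V → Bool := Function.update ω x true

/-- Flip the state at vertex `x`. -/
def flipAt (ω : V → Bool) (x : V) : V → Bool := Function.update ω x (!ω x)

/-- Variance of `f` under resampling the states at `x, y` from `π_x ⊗ π_y`
conditioned on the edge being non-empty. -/
noncomputable def edgeVar (p : ℝ) (f : (V → Bool) → ℝ) (x y : V) (ω : V → Bool) : ℝ :=
  let u : Bool → Bool → ℝ := fun a b => f (Function.update (Function.update ω x a) y b)
  let m : ℝ := ((1 - p) / (2 - p)) * u true false + ((1 - p) / (2 - p)) * u false true +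
      (p / (2 - p)) * u true true
  ((1 - p) / (2 - p)) * (u true false - m) ^ 2 + ((1 - p) / (2 - p)) * (u false true - m) ^ 2 +
    (p / (2 - p)) * (u true true - m) ^ 2

/-- The CBSEP Dirichlet form `D(f) = Σ_{e∈E} μ(𝟙_{E_e} Var_e(f | E_e))`,
written as half the sum over oriented edges. -/
noncomputable def dirichlet (G : SimpleGraph V) [DecidableRel G.Adj] (p : ℝ)
    (f : (V → Bool) → ℝ) : ℝ :=
  (1 / 2) * ∑ x, ∑ y ∈ G.neighborFinset x,
    ∑ ω ∈ (OmegaPlus V).filter (fun ω => ω x = true ∨ ω y = true), mu p ω * edgeVar p f x y ω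

section Aux

set_option linter.unusedSectionVars false

lemma mu_nonneg' {p : ℝ} (hp0 : 0 ≤ p) (hp1 : p ≤ 1) (ω : V → Bool) : 0 ≤ mu p ω := by
  unfold mu bern
  apply div_nonneg
  · exact Finset.prod_nonneg fun x _ => by split <;> linarith
  · have : (1 - p) ^ Fintype.card V ≤ 1 := pow_le_one₀ (by linarith) (by linarith)
    linarith

lemma var_key (w v a b c : ℝ) (hw : 0 ≤ w) (hv : 0 ≤ v) (hs : 2*w + v = 1) :
    v * w * (b - c)^2 ≤
      w*(a - (w*a + w*b + v*c))^2 + w*(b - (w*a + w*b + v*c))^2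
        + v*(c - (w*a + w*b + v*c))^2 := by
  have hv' : v = 1 - 2*w := by linarith
  subst hv'
  nlinarith [mul_nonneg (mul_nonneg hw hw) (sq_nonneg (a-b)),
             mul_nonneg (mul_nonneg hw hv) (sq_nonneg (a-c))]

lemma edgeVar_ge {p : ℝ} (hp0 : 0 < p) (hp12 : p ≤ 1/2) (f : (V → Bool) → ℝ) (x y : V)
    (ω : V → Bool) :
    p * (1-p) / 4 * (f (Function.update (Function.update ω x false) y true)
        - f (Function.update (Function.update ω x true) y true))^2 ≤ edgeVar p f x y ω := by
  have hs : (0:ℝ) < 2 - p := by linarith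
  simp only [edgeVar]
  set a := f (Function.update (Function.update ω x true) y false) with ha
  set b := f (Function.update (Function.update ω x false) y true) with hb
  set c := f (Function.update (Function.update ω x true) y true) with hc
  have hw : 0 ≤ (1-p)/(2-p) := div_nonneg (by linarith) hs.le
  have hv : 0 ≤ p/(2-p) := div_nonneg hp0.le hs.le
  have hsum : 2*((1-p)/(2-p)) + p/(2-p) = 1 := by field_simp; ring
  have h1 := var_key ((1-p)/(2-p)) (p/(2-p)) a b c hw hv hsum
  have h2 : p * (1-p) / 4 ≤ p/(2-p) * ((1-p)/(2-p)) := by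
    rw [div_mul_div_comm, div_le_div_iff₀ (by norm_num) (by positivity)]
    nlinarith [mul_nonneg hp0.le (by linarith : (0:ℝ) ≤ 1 - p)]
  have h3 : p * (1-p) / 4 * (b - c)^2 ≤ p/(2-p) * ((1-p)/(2-p)) * (b - c)^2 :=
    mul_le_mul_of_nonneg_right h2 (sq_nonneg _)
  linarith

lemma edgeVar_nonneg' {p : ℝ} (hp0 : 0 < p) (hp12 : p ≤ 1/2) (f : (V → Bool) → ℝ) (x y : V)
    (ω : V → Bool) : 0 ≤ edgeVar p f x y ω := by
  refine le_trans ?_ (edgeVar_ge hp0 hp12 f x y ω)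
  have : (0:ℝ) ≤ p * (1-p) / 4 :=
    div_nonneg (mul_nonneg hp0.le (by linarith)) (by norm_num)
  exact mul_nonneg this (sq_nonneg _)

end Aux

/-- There is an absolute constant `c > 0` such that `c⁻¹·D^FA(f) ≤ D(f)` for every graph
with `p ∈ (0,1/2]` and every `f`, where `D^FA` is the FA-1f Dirichlet form. -/
theorem stmt11 : ∃ c : ℝ, 0 < c ∧ ∀ (W : Type) [Fintype W] [DecidableEq W]
    (G : SimpleGraph W) [DecidableRel G.Adj] (p : ℝ), 0 < p → p ≤ 1 / 2 →
    ∀ f : (W → Bool) → ℝ,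
      c⁻¹ * (∑ x, ∑ ω ∈ (OmegaPlus W).filter
            (fun ω => ∃ y ∈ G.neighborFinset x, ω y = true),
          mu p ω * (p * (1 - p) * (f (flipAt ω x) - f ω) ^ 2)) ≤
        dirichlet G p f := by
  refine ⟨8, by norm_num, ?_⟩
  intro W _ _ G _ p hp0 hp12 f
  have hp1 : p ≤ 1 := by linarith
  have hμ : ∀ ω : W → Bool, 0 ≤ mu p ω := mu_nonneg' hp0.le hp1
  have hg : ∀ (x : W) (ω : W → Bool),
      0 ≤ mu p ω * (p * (1 - p) * (f (flipAt ω x) - f ω) ^ 2) :=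
    fun x ω => mul_nonneg (hμ ω)
      (mul_nonneg (mul_nonneg hp0.le (by linarith)) (sq_nonneg _))
  have main : (∑ x, ∑ ω ∈ (OmegaPlus W).filter
        (fun ω => ∃ y ∈ G.neighborFinset x, ω y = true),
        mu p ω * (p * (1 - p) * (f (flipAt ω x) - f ω) ^ 2)) ≤
      4 * ∑ x, ∑ y ∈ G.neighborFinset x,
        ∑ ω ∈ (OmegaPlus W).filter (fun ω => ω x = true ∨ ω y = true),
          mu p ω * edgeVar p f x y ω := by
    rw [Finset.mul_sum]
    apply Finset.sum_le_sum
    intro x _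
    have step1 : ∑ ω ∈ (OmegaPlus W).filter
          (fun ω => ∃ y ∈ G.neighborFinset x, ω y = true),
          mu p ω * (p * (1 - p) * (f (flipAt ω x) - f ω) ^ 2) ≤
        ∑ y ∈ G.neighborFinset x, ∑ ω ∈ (OmegaPlus W).filter (fun ω => ω y = true),
          mu p ω * (p * (1 - p) * (f (flipAt ω x) - f ω) ^ 2) := by
      simp only [Finset.sum_filter]
      rw [Finset.sum_comm]
      apply Finset.sum_le_sum
      intro ω _
      split_ifs with h
      · obtain ⟨y₀, hy₀, hωy⟩ := h
        calc mu p ω * (p * (1 - p) * (f (flipAt ω x) - f ω) ^ 2)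
            = (if ω y₀ = true then
                mu p ω * (p * (1 - p) * (f (flipAt ω x) - f ω) ^ 2) else 0) := by
              rw [if_pos hωy]
          _ ≤ _ := Finset.single_le_sum
              (f := fun y => if ω y = true then
                mu p ω * (p * (1 - p) * (f (flipAt ω x) - f ω) ^ 2) else 0)
              (fun i _ => by split_ifs; exacts [hg x ω, le_rfl]) hy₀
      · exact Finset.sum_nonneg fun i _ => by split_ifs; exacts [hg x ω, le_rfl]
    have step2 : ∀ y ∈ G.neighborFinset x,
        ∑ ω ∈ (OmegaPlus W).filter (fun ω => ω y = true),
          mu p ω * (p * (1 - p) * (f (flipAt ω x) - f ω) ^ 2) ≤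
        4 * ∑ ω ∈ (OmegaPlus W).filter (fun ω => ω x = true ∨ ω y = true),
          mu p ω * edgeVar p f x y ω := by
      intro y hy
      have hadj : G.Adj x y := by simpa using hy
      have hyx : y ≠ x := (G.ne_of_adj hadj).symm
      have sub : (OmegaPlus W).filter (fun ω => ω y = true) ⊆
          (OmegaPlus W).filter (fun ω => ω x = true ∨ ω y = true) := by
        intro ω hω
        simp only [Finset.mem_filter] at hω ⊢
        exact ⟨hω.1, Or.inr hω.2⟩
      calc ∑ ω ∈ (OmegaPlus W).filter (fun ω => ω y = true),
            mu p ω * (p * (1 - p) * (f (flipAt ω x) - f ω) ^ 2)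
          ≤ ∑ ω ∈ (OmegaPlus W).filter (fun ω => ω y = true),
            4 * (mu p ω * edgeVar p f x y ω) := by
            apply Finset.sum_le_sum
            intro ω hω
            have hωy : ω y = true := by
              have := (Finset.mem_filter.mp hω).2
              simpa using this
            have hupd : ∀ a : Bool,
                Function.update (Function.update ω x a) y true = Function.update ω x a := by
              intro a
              have h : (Function.update ω x a) y = true := by
                rw [Function.update_of_ne hyx]; exact hωy
              rw [← h, Function.update_eq_self]
            have hsq : (f (Function.update (Function.update ω x false) y true)
                - f (Function.update (Function.update ω x true) y true))^2
                = (f (flipAt ω x) - f ω)^2 := by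
              rw [hupd, hupd]
              cases hx : ω x
              · have h1 : Function.update ω x false = ω := by
                  conv_lhs => rw [← hx]
                  rw [Function.update_eq_self]
                have h2 : flipAt ω x = Function.update ω x true := by
                  rw [flipAt, hx]; rfl
                rw [h1, h2]; ring
              · have h1 : Function.update ω x true = ω := by
                  conv_lhs => rw [← hx]
                  rw [Function.update_eq_self]
                have h2 : flipAt ω x = Function.update ω x false := by
                  rw [flipAt, hx]; rfl
                rw [h1, h2]
            have hev := edgeVar_ge hp0 hp12 f x y ω
            rw [hsq] at hev
            nlinarith [mul_le_mul_of_nonneg_left hev (hμ ω)]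
        _ = 4 * ∑ ω ∈ (OmegaPlus W).filter (fun ω => ω y = true),
              mu p ω * edgeVar p f x y ω := by rw [Finset.mul_sum]
        _ ≤ 4 * ∑ ω ∈ (OmegaPlus W).filter (fun ω => ω x = true ∨ ω y = true),
              mu p ω * edgeVar p f x y ω := by
            refine mul_le_mul_of_nonneg_left ?_ (by norm_num)
            exact Finset.sum_le_sum_of_subset_of_nonneg sub
              (fun ω _ _ => mul_nonneg (hμ ω) (edgeVar_nonneg' hp0 hp12 f x y ω))
    calc ∑ ω ∈ (OmegaPlus W).filter (fun ω => ∃ y ∈ G.neighborFinset x, ω y = true),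
          mu p ω * (p * (1 - p) * (f (flipAt ω x) - f ω) ^ 2)
        ≤ ∑ y ∈ G.neighborFinset x, ∑ ω ∈ (OmegaPlus W).filter (fun ω => ω y = true),
          mu p ω * (p * (1 - p) * (f (flipAt ω x) - f ω) ^ 2) := step1
      _ ≤ ∑ y ∈ G.neighborFinset x,
          4 * ∑ ω ∈ (OmegaPlus W).filter (fun ω => ω x = true ∨ ω y = true),
            mu p ω * edgeVar p f x y ω := Finset.sum_le_sum step2
      _ = 4 * ∑ y ∈ G.neighborFinset x,
          ∑ ω ∈ (OmegaPlus W).filter (fun ω => ω x = true ∨ ω y = true),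
            mu p ω * edgeVar p f x y ω := by rw [← Finset.mul_sum]
  rw [dirichlet]
  linarith
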